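/- Let k be a field of characteristic 0 and n ≥ 2 an integer, and let A = kQ/(p₂p₁) be the gentle algebra of the cylinder dissection together with the bilinear map μ̃ determined by μ̃(p₂,p₁) = q̄. Then μ̃ is not a Hochschild 2-coboundary: there is no k-linear map f : A → A such that μ̃(a,b) = a·f(b) − f(a·b) + f(a)·b for all a,b ∈ A. -/

import Mathlib

/-!
`CylIdx n` indexes the `k`-basis of the gentle algebra `A = kQ/(p₂p₁)` of the cylinder
dissection: the quiver `Q` has vertices `u₀, …, u_{n-1}, v` (encoded as `0, …, n-1, n`),
arrows `q_i : u_{i-1} → u_i` for `1 ≤ i ≤ n-1`, `p₁ : u₀ → v` and `p₂ : v → u_{n-1}`.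
The basis of `A` consists of the trivial paths `e x`, the arrows `p₁`, `p₂`, and the
paths `q i j = q_j ⋯ q_i` for `1 ≤ i ≤ j ≤ n-1`.
-/
inductive CylIdx (n : ℕ) : Type
  | e : (x : ℕ) → x ≤ n → CylIdx n
  | p1 : CylIdx n
  | p2 : CylIdx n
  | q : (i j : ℕ) → 1 ≤ i → i ≤ j → j ≤ n - 1 → CylIdx n

namespace CylIdx

/-- Source vertex of a basis path (vertex `u_x` is encoded `x`, the vertex `v` as `n`). -/
def src {n : ℕ} : CylIdx n → ℕ
  | e x _ => x
  | p1 => 0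
  | p2 => n
  | q i _ _ _ _ => i - 1

/-- Target vertex of a basis path. -/
def tgt {n : ℕ} : CylIdx n → ℕ
  | e x _ => x
  | p1 => n
  | p2 => n - 1
  | q _ j _ _ _ => j

end CylIdx

/-- Structure constants of `A = kQ/(p₂p₁)`: the product `b · a` of two basis paths is a
basis path (the concatenation) or zero; note `p₂ · p₁ = 0` is the gentle relation. -/
def cylMul {n : ℕ} : CylIdx n → CylIdx n → Option (CylIdx n)
  | .e x _, a => if x = a.tgt then some a else none
  | b, .e x _ => if b.src = x then some b else none
  | .q i' j' _ h2 h3, .q i j g1 g2 _ =>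
      if h : i' = j + 1 then some (.q i j' g1 (by omega) h3) else none
  | _, _ => none


/-- **μ̃ is not a Hochschild 2-coboundary** of the gentle algebra `A = kQ/(p₂p₁)` of the
cylinder dissection. -/
theorem cylinder_mu_not_coboundary
    (k : Type*) [Field k] [CharZero k]
    (n : ℕ) (hn : 2 ≤ n)
    (A : Type*) [Ring A] [Algebra k A]
    (B : Module.Basis (CylIdx n) k A)
    (hmul : ∀ b a : CylIdx n, B b * B a = (cylMul b a).elim 0 B)
    (hone : (1 : A) = ∑ x ∈ (Finset.range (n + 1)).attach,
      B (.e x.1 (by have := Finset.mem_range.mp x.2; omega)))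
    (μ : A →ₗ[k] A →ₗ[k] A)
    (hμ1 : μ (B .p2) (B .p1) = B (.q 1 (n - 1) le_rfl (by omega) le_rfl))
    (hμ0 : ∀ b a : CylIdx n, ¬(b = .p2 ∧ a = .p1) → μ (B b) (B a) = 0) :
    ¬ ∃ f : A →ₗ[k] A, ∀ a b : A, μ a b = a * f b - f (a * b) + f a * b := by
  rintro ⟨f, hf⟩
  set i0 : CylIdx n := .q 1 (n - 1) le_rfl (by omega) le_rfl with hi0
  -- left multiplication by p2 lands in span of p2
  have hL : ∀ v : A, B.repr (B .p2 * v) i0 = 0 := by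
    intro v
    have := DFunLike.congr_fun (Module.Basis.ext B (f₁ := (Finsupp.lapply i0).comp
        (B.repr.toLinearMap.comp (LinearMap.mulLeft k (B .p2)))) (f₂ := 0)
        (fun a => by
          simp only [LinearMap.comp_apply, LinearMap.mulLeft_apply,
            LinearEquiv.coe_toLinearMap, Finsupp.lapply_apply, LinearMap.zero_apply]
          rw [hmul]
          cases a with
          | e x hx =>
            simp only [cylMul, CylIdx.src]
            by_cases hc : n = x
            · simp [Finsupp.single_apply, hi0, hc]
            · simp [hc]
          | p1 => simp [cylMul]
          | p2 => simp [cylMul]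
          | q i j g1 g2 g3 => simp [cylMul])) v
    simpa using this
  have hR : ∀ v : A, B.repr (v * B .p1) i0 = 0 := by
    intro v
    have := DFunLike.congr_fun (Module.Basis.ext B (f₁ := (Finsupp.lapply i0).comp
        (B.repr.toLinearMap.comp (LinearMap.mulRight k (B .p1)))) (f₂ := 0)
        (fun a => by
          simp only [LinearMap.comp_apply, LinearMap.mulRight_apply,
            LinearEquiv.coe_toLinearMap, Finsupp.lapply_apply, LinearMap.zero_apply]
          rw [hmul]
          cases a with
          | e x hx =>
            simp only [cylMul, CylIdx.tgt]
            by_cases hc : x = n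
            · simp [Finsupp.single_apply, hi0, hc]
            · simp [hc]
          | p1 => simp [cylMul]
          | p2 => simp [cylMul]
          | q i j g1 g2 g3 => simp [cylMul])) v
    simpa using this
  have h := hf (B .p2) (B .p1)
  rw [hμ1, hmul] at h
  simp only [cylMul, Option.elim, map_zero] at h
  have h2 := congrArg (fun v => B.repr v i0) h
  simp only [map_add, map_sub, Finsupp.add_apply, Finsupp.sub_apply,
    B.repr_self, Finsupp.single_apply, hL, hR, map_zero, Finsupp.zero_apply] at h2
  simp at h2
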